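/- Let (X_n)_{n≥0} be a weakly symmetric random walk on a regular language over a finite alphabet 𝒜 and let w₁, w₂ ∈ 𝒜* be words of length ≥ 2. Then the cones C(w₁) and C(w₂) are either nested or disjoint: C(w₁) ⊆ C(w₂), or C(w₂) ⊆ C(w₁), or C(w₁) ∩ C(w₂) = ∅. Moreover, if |w₁| = |w₂| then either C(w₁) = C(w₂) or C(w₁) ∩ C(w₂) = ∅. -/
import Mathlib


open MeasureTheory Filter Topology
open scoped ENNReal Classical

/-- A random walk on a regular language over the finite alphabet `A`:
a Markov chain on finite words whose one-step transitions replace at most the last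
two letters of the current word by a (nonempty, from long words) word of length at
most three, with probabilities `p` depending only on the last two letters of the
current word and on the replacing word. -/
structure RLRW (A : Type) [Fintype A] [DecidableEq A] where
  /-- the local transition probabilities -/
  p : List A → List A → ℝ
  /-- the full one-step transition probabilities between words -/
  step : List A → List A → ℝ
  step_nonneg : ∀ u v, 0 ≤ step u v
  step_hasSum : ∀ u, HasSum (step u) 1
  /-- from a word of length `≥ 2`, the last two letters are replaced by a word of
  length `1`, `2` or `3`, with probability depending only on these data -/
  step_long : ∀ (w x y : List A), x.length = 2 → 1 ≤ y.length → y.length ≤ 3 →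
    step (w ++ x) (w ++ y) = p x y
  /-- transitions from words of length `≤ 1` -/
  step_short : ∀ (x y : List A), x.length ≤ 1 → y.length ≤ x.length + 1 → step x y = p x y
  /-- no other transition is possible -/
  step_support : ∀ u v, 0 < step u v →
    ∃ w x y : List A, u = w ++ x ∧ v = w ++ y ∧ x.length = min u.length 2 ∧
      y.length ≤ x.length + 1 ∧ x.length ≤ y.length + 1

namespace RLRW

variable {A : Type} [Fintype A] [DecidableEq A]

/-- `n`-step transition probabilities `p⁽ⁿ⁾(u,v)`. -/
noncomputable def pstep (M : RLRW A) : ℕ → List A → List A → ℝ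
  | 0, u, v => if u = v then 1 else 0
  | (n + 1), u, v => ∑' w : List A, M.pstep n u w * M.step w v

/-- `n`-step transition probabilities where all the words visited at times `1,…,n`
are required to lie in the set `S`. -/
noncomputable def pstepIn (M : RLRW A) (S : Set (List A)) : ℕ → List A → List A → ℝ
  | 0, u, v => if u = v then 1 else 0
  | (n + 1), u, v => if v ∈ S then ∑' w : List A, M.pstepIn S n u w * M.step w v else 0

/-- The set `ℒ` of words accessible from the empty word. -/
def Lang (M : RLRW A) : Set (List A) := {w | ∃ n, 0 < M.pstep n [] w}

/-- Weak symmetry of the random walk. -/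
def WeaklySymmetric (M : RLRW A) : Prop := ∀ u v, 0 < M.step u v → 0 < M.step v u

/-- Suffix-irreducibility of the random walk. -/
def SuffixIrreducible (M : RLRW A) : Prop :=
  ∀ (w₀ : List A) (a₀ b₀ : A), w₀ ++ [a₀, b₀] ∈ M.Lang → ∀ a b : A,
    ∃ (n : ℕ) (w₁ : List A),
      0 < M.pstepIn {v | (w₀ ++ [a₀, b₀]).length ≤ v.length} n (w₀ ++ [a₀, b₀])
          (w₀ ++ w₁ ++ [a, b])

/-- Transience of the random walk restricted to `ℒ` (finiteness of the Green function). -/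
def Transient (M : RLRW A) : Prop := ∀ w ∈ M.Lang, Summable fun n => M.pstep n w w

/-- Recurrence of the random walk restricted to `ℒ`. -/
def Recurrent (M : RLRW A) : Prop := ∀ w ∈ M.Lang, ¬ Summable fun n => M.pstep n w w

/-- The entropy sequence `E[-log π_n(X_n)] = ∑_w π_n(w)·(-log π_n(w))`, where `π_n`
is the distribution of `X_n`. -/
noncomputable def entropySeq (M : RLRW A) (n : ℕ) : ℝ :=
  ∑' w : List A, M.pstep n [] w * (-Real.log (M.pstep n [] w))

/-- `X` is (a version of) the random walk given by `M`, started at the empty word,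
on the probability space `(Ω, P)`: its finite-dimensional distributions are the ones
prescribed by the one-step transition probabilities. -/
def IsRandomWalk (M : RLRW A) {Ω : Type} [MeasurableSpace Ω] (P : Measure Ω)
    (X : ℕ → Ω → List A) : Prop :=
  ∀ (n : ℕ) (w : ℕ → List A),
    P {ω | ∀ i ≤ n, X i ω = w i} =
      ENNReal.ofReal ((if w 0 = ([] : List A) then 1 else 0) *
        ∏ i ∈ Finset.range n, M.step (w i) (w (i + 1)))

/-- The word formed by the last two letters of `w`. -/
def lastTwo (w : List A) : List A := w.drop (w.length - 2)

/-- The cone rooted at `w₀`: all words `w` of length `≥ |w₀|` reachable from `w₀` by a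
path through words of length `≥ |w₀|`. -/
def Cone (M : RLRW A) (w₀ : List A) : Set (List A) :=
  {w | ∃ (n : ℕ) (f : ℕ → List A), f 0 = w₀ ∧ f n = w ∧
    (∀ i ≤ n, w₀.length ≤ (f i).length) ∧ ∀ i < n, 0 < M.step (f i) (f (i + 1))}

/-- The boundary `∂C(w)` of a cone. -/
def coneBoundary (M : RLRW A) (w : List A) : Set (List A) :=
  {w' | w' ∈ M.Cone w ∧ w'.length = w.length ∧ ∃ w'', w'' ∉ M.Cone w ∧ 0 < M.step w' w''}

/-- The random walk is expanding if every cone rooted at a word of `ℒ` contains two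
disjoint proper subcones rooted at words of `ℒ`. -/
def Expanding (M : RLRW A) : Prop :=
  ∀ w₀ ∈ M.Lang, 2 ≤ w₀.length →
    ∃ w₁ w₂ : List A, w₁ ∈ M.Lang ∧ w₂ ∈ M.Lang ∧ w₁ ∈ M.Cone w₀ ∧ w₂ ∈ M.Cone w₀ ∧
      M.Cone w₁ ⊂ M.Cone w₀ ∧ M.Cone w₂ ⊂ M.Cone w₀ ∧ M.Cone w₁ ∩ M.Cone w₂ = ∅

/-- Probability of a first visit to `v` at time exactly `n` (for `n ≥ 1`),
starting from `u`. -/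
noncomputable def firstVisit (M : RLRW A) : ℕ → List A → List A → ℝ
  | 0, _, _ => 0
  | 1, u, v => M.step u v
  | (n + 2), u, v => ∑' w : List A, if w = v then 0 else M.step u w * M.firstVisit (n + 1) w v

/-- The hitting probability `P[∃ n ≥ 0 : X_n = v | X_0 = u]`. -/
noncomputable def hitProb (M : RLRW A) (u v : List A) : ℝ :=
  if u = v then 1 else ∑' n : ℕ, M.firstVisit n u v

/-- The Greenian distance `d_Green(u,v) = - log P[∃ n ≥ 0 : X_n = v | X_0 = u]`. -/
noncomputable def dGreen (M : RLRW A) (u v : List A) : ℝ := -Real.log (M.hitProb u v)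

/-- The last-visit generating function `L(o,w|1)`. -/
noncomputable def lastVisitGF (M : RLRW A) (w : List A) : ℝ :=
  ∑' n : ℕ, M.pstepIn {v | v ≠ ([] : List A)} n [] w

/-- Auxiliary: a path from `u` to `v` through words of length `≥ L`. -/
def PathGE (M : RLRW A) (L : ℕ) (u v : List A) : Prop :=
  ∃ (n : ℕ) (f : ℕ → List A), f 0 = u ∧ f n = v ∧
    (∀ i ≤ n, L ≤ (f i).length) ∧ ∀ i < n, 0 < M.step (f i) (f (i + 1))

lemma mem_cone_iff (M : RLRW A) (w₀ w : List A) :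
    w ∈ M.Cone w₀ ↔ M.PathGE w₀.length w₀ w := Iff.rfl

lemma PathGE.mono {M : RLRW A} {L L' : ℕ} (h : L' ≤ L) {u v : List A}
    (hp : M.PathGE L u v) : M.PathGE L' u v := by
  obtain ⟨n, f, h0, hn, hlen, hstep⟩ := hp
  exact ⟨n, f, h0, hn, fun i hi => le_trans h (hlen i hi), hstep⟩

lemma PathGE.trans {M : RLRW A} {L : ℕ} {u v w : List A}
    (h1 : M.PathGE L u v) (h2 : M.PathGE L v w) : M.PathGE L u w := by
  obtain ⟨n, f, hf0, hfn, hfl, hfs⟩ := h1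
  obtain ⟨m, g, hg0, hgm, hgl, hgs⟩ := h2
  refine ⟨n + m, fun i => if i ≤ n then f i else g (i - n), by simp [hf0], ?_, ?_, ?_⟩
  · by_cases hm : m = 0
    · subst hm; simpa [hfn, ← hg0] using hgm
    · have : ¬ (n + m ≤ n) := by omega
      simp only [this, if_false]
      simpa using hgm
  · intro i hi
    by_cases h : i ≤ n
    · simpa [h] using hfl i h
    · simp only [h, if_false]
      exact hgl (i - n) (by omega)
  · intro i hi
    by_cases h : i + 1 ≤ n
    · have h' : i ≤ n := by omega
      simpa [h, h'] using hfs i (by omega)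
    · by_cases h' : i ≤ n
      · have hin : i = n := by omega
        have h1' : ¬ (i + 1 ≤ n) := h
        simp only [h', h1', if_true, if_false]
        have : i + 1 - n = 1 := by omega
        rw [this, hin, hfn, ← hg0]
        exact hgs 0 (by omega)
      · simp only [h, h', if_false]
        have : i + 1 - n = (i - n) + 1 := by omega
        rw [this]
        exact hgs (i - n) (by omega)

lemma PathGE.symm {M : RLRW A} (hWS : M.WeaklySymmetric) {L : ℕ} {u v : List A}
    (h : M.PathGE L u v) : M.PathGE L v u := by
  obtain ⟨n, f, hf0, hfn, hfl, hfs⟩ := h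
  refine ⟨n, fun i => f (n - i), by simp [hfn], by simp [hf0],
    fun i _ => hfl (n - i) (by omega), fun i hi => ?_⟩
  have hs := hfs (n - (i + 1)) (by omega)
  have e : n - (i + 1) + 1 = n - i := by omega
  rw [e] at hs
  exact hWS _ _ hs

lemma cone_subset_of_inter {M : RLRW A} (hWS : M.WeaklySymmetric)
    {w₁ w₂ : List A} (hle : w₁.length ≤ w₂.length)
    {u : List A} (h1 : u ∈ M.Cone w₁) (h2 : u ∈ M.Cone w₂) :
    M.Cone w₂ ⊆ M.Cone w₁ := by
  intro v hv
  have p1 : M.PathGE w₁.length w₁ u := h1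
  have p2 : M.PathGE w₂.length u w₂ := PathGE.symm hWS h2
  have p3 : M.PathGE w₂.length w₂ v := hv
  exact p1.trans ((p2.trans p3).mono hle)

end RLRW

/-- For a weakly symmetric random walk on a regular language, any two
cones are either nested in each other or disjoint; if moreover the roots have equal
length, then the cones are either equal or disjoint. -/
theorem cones_nested_or_disjoint
    {A : Type} [Fintype A] [DecidableEq A] (M : RLRW A)
    (hWS : M.WeaklySymmetric)
    (w₁ w₂ : List A) (h₁ : 2 ≤ w₁.length) (h₂ : 2 ≤ w₂.length) :
    (M.Cone w₁ ⊆ M.Cone w₂ ∨ M.Cone w₂ ⊆ M.Cone w₁ ∨ M.Cone w₁ ∩ M.Cone w₂ = ∅) ∧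
    (w₁.length = w₂.length →
      M.Cone w₁ = M.Cone w₂ ∨ M.Cone w₁ ∩ M.Cone w₂ = ∅) := by
  by_cases hE : M.Cone w₁ ∩ M.Cone w₂ = ∅
  · exact ⟨Or.inr (Or.inr hE), fun _ => Or.inr hE⟩
  · obtain ⟨u, hu1, hu2⟩ := Set.nonempty_iff_ne_empty.2 hE
    constructor
    · rcases le_total w₁.length w₂.length with hle | hle
      · exact Or.inr (Or.inl (RLRW.cone_subset_of_inter hWS hle hu1 hu2))
      · exact Or.inl (RLRW.cone_subset_of_inter hWS hle hu2 hu1)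
    · intro hlen
      exact Or.inl (Set.Subset.antisymm
        (RLRW.cone_subset_of_inter hWS hlen.ge hu2 hu1)
        (RLRW.cone_subset_of_inter hWS hlen.le hu1 hu2))
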